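/- Let A_* be a finitely generated free based chain complex over a ring R such that A_j = 0 for j ≤ l−2 and H_{l−1}(A_*) = 0. Then there exists a chain complex B_*, chain homotopy equivalent to A_*, with B_j ≅ A_j for j ≥ l+2 and j = l, B_{l+1} = A_{l+1} ⊕ A_{l−1}, and B_j = 0 for j ≤ l−1. -/

import Mathlib

open CategoryTheory

namespace SplitOff

variable {R : Type} [Ring R] (l : ℤ) (A : ChainComplex (ModuleCat R) ℤ)

abbrev P : ModuleCat R := ModuleCat.of R ((A.X (l+1)) × (A.X (l-1)))

def BX (j : ℤ) : ModuleCat R :=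
  if j = l + 1 then P l A
  else if j = l - 1 then ModuleCat.of R PUnit
  else A.X j

lemma BX_mid : BX l A (l+1) = P l A := if_pos rfl

lemma BX_low : BX l A (l-1) = ModuleCat.of R PUnit := by
  rw [BX, if_neg (by omega), if_pos rfl]

lemma BX_gen (j : ℤ) (h1 : j ≠ l+1) (h2 : j ≠ l-1) : BX l A j = A.X j := by
  rw [BX, if_neg h1, if_neg h2]

variable (s : A.X (l-1) ⟶ A.X l)

def φ₁ : P l A ⟶ A.X l :=
  ModuleCat.ofHom (LinearMap.comp (A.d (l+1) l).hom (LinearMap.fst R (A.X (l+1)) (A.X (l-1)))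
    + LinearMap.comp s.hom (LinearMap.snd R (A.X (l+1)) (A.X (l-1))))

def φ₂ : A.X (l+2) ⟶ P l A :=
  ModuleCat.ofHom (LinearMap.prod (A.d (l+2) (l+1)).hom 0)

def κ : A.X l ⟶ P l A :=
  ModuleCat.ofHom (LinearMap.prod 0 (-(A.d l (l-1)).hom))

def ι₁ : A.X (l+1) ⟶ P l A :=
  ModuleCat.ofHom (LinearMap.prod LinearMap.id 0)

def ρ : A.X l ⟶ A.X l := 𝟙 (A.X l) - A.d l (l-1) ≫ s

/-- The differential of `B`. -/
def Bd (i j : ℤ) : BX l A i ⟶ BX l A j :=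
  if hij : j + 1 = i then
    if h1 : i = l + 1 then
      eqToHom (by rw [h1]; exact BX_mid l A) ≫ φ₁ l A s ≫
        eqToHom (by rw [show j = l by omega]; exact (BX_gen l A l (by omega) (by omega)).symm)
    else if h2 : i = l + 2 then
      eqToHom (by rw [h2]; exact BX_gen l A (l+2) (by omega) (by omega)) ≫ φ₂ l A ≫
        eqToHom (by rw [show j = l + 1 by omega]; exact (BX_mid l A).symm)
    else if _h3 : i ≤ l then 0
    else
      eqToHom (BX_gen l A i (by omega) (by omega)) ≫ A.d i j ≫
        eqToHom (BX_gen l A j (by omega) (by omega)).symm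
  else 0

lemma Bd_lp1 (j : ℤ) (hj : j = l) :
    Bd l A s (l+1) j = eqToHom (BX_mid l A) ≫ φ₁ l A s ≫
      eqToHom (by rw [hj]; exact (BX_gen l A l (by omega) (by omega)).symm) := by
  subst hj
  rw [Bd, dif_pos rfl, dif_pos rfl]

lemma Bd_lp2 (j : ℤ) (hj : j = l + 1) :
    Bd l A s (l+2) j = eqToHom (BX_gen l A (l+2) (by omega) (by omega)) ≫ φ₂ l A ≫
      eqToHom (by rw [hj]; exact (BX_mid l A).symm) := by
  subst hj
  rw [Bd, dif_pos (show l + 1 + 1 = l + 2 by omega), dif_neg (by omega), dif_pos rfl]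

lemma Bd_le (i j : ℤ) (hi : i ≤ l) : Bd l A s i j = 0 := by
  by_cases hij : j + 1 = i
  · rw [Bd, dif_pos hij, dif_neg (by omega), dif_neg (by omega), dif_pos hi]
  · rw [Bd, dif_neg hij]

lemma Bd_ge (i j : ℤ) (hij : j + 1 = i) (hi : l + 3 ≤ i) :
    Bd l A s i j = eqToHom (BX_gen l A i (by omega) (by omega)) ≫ A.d i j ≫
      eqToHom (BX_gen l A j (by omega) (by omega)).symm := by
  rw [Bd, dif_pos hij, dif_neg (by omega), dif_neg (by omega), dif_neg (by omega)]

lemma Bd_shape (i j : ℤ) (hij : ¬ (j + 1 = i)) : Bd l A s i j = 0 := by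
  rw [Bd, dif_neg hij]

lemma d_s_comm (hs : s ≫ A.d l (l-1) = 𝟙 (A.X (l-1))) (c : A.X (l-1)) :
    A.d l (l-1) (s c) = c :=
  LinearMap.congr_fun (congrArg ModuleCat.Hom.hom hs) c

lemma d_d_apply (i j k : ℤ) (x : A.X i) : A.d j k (A.d i j x) = 0 := by
  have := A.d_comp_d i j k
  exact LinearMap.congr_fun (congrArg ModuleCat.Hom.hom this) x

/-- The complex `B`. -/
abbrev B : ChainComplex (ModuleCat R) ℤ where
  X := BX l A
  d := Bd l A s
  shape i j h := Bd_shape l A s i j (by simpa using h)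
  d_comp_d' i j k hij hjk := by
    simp only [ComplexShape.down_Rel] at hij hjk
    rcases lt_trichotomy j (l+1) with hj | rfl | hj
    · rw [Bd_le l A s j k (by omega), Limits.comp_zero]
    · obtain rfl : i = l + 2 := by omega
      rw [Bd_lp2 l A s _ rfl, Bd_lp1 l A s _ (by omega)]
      simp only [Category.assoc, eqToHom_trans_assoc, eqToHom_refl, Category.id_comp]
      have : φ₂ l A ≫ φ₁ l A s = 0 := by
        apply ModuleCat.hom_ext; apply LinearMap.ext
        intro x
        have h0 : A.d (l+1) l (A.d (l+2) (l+1) x) = 0 := d_d_apply A _ _ _ x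
        have h1 : φ₁ l A s (φ₂ l A x) = A.d (l+1) l (A.d (l+2) (l+1) x) + s 0 := rfl
        show φ₁ l A s (φ₂ l A x) = 0
        rw [h1, h0, map_zero, add_zero]
      rw [reassoc_of% this]
      simp
    · rcases eq_or_lt_of_le (show l + 2 ≤ j by omega) with hj2 | hj2
      · obtain rfl : j = l + 2 := by omega
        obtain rfl : i = l + 3 := by omega
        rw [Bd_ge l A s _ _ (by omega) (by omega), Bd_lp2 l A s _ (by omega)]
        simp only [Category.assoc, eqToHom_trans_assoc, eqToHom_refl, Category.id_comp]
        have h1 : A.d (l+3) (l+2) ≫ φ₂ l A = 0 := by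
          apply ModuleCat.hom_ext; apply LinearMap.ext
          intro x
          show φ₂ l A (A.d (l+3) (l+2) x) = 0
          have h0 : A.d (l+2) (l+1) (A.d (l+3) (l+2) x) = 0 := d_d_apply A _ _ _ x
          have : φ₂ l A (A.d (l+3) (l+2) x) = (A.d (l+2) (l+1) (A.d (l+3) (l+2) x), 0) := rfl
          rw [this, h0]
          rfl
        rw [reassoc_of% h1]
        simp
      · rw [Bd_ge l A s i j hij (by omega), Bd_ge l A s j k hjk (by omega)]
        simp only [Category.assoc, eqToHom_trans_assoc, eqToHom_refl, Category.id_comp]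
        rw [reassoc_of% (A.d_comp_d i j k)]
        simp

lemma BX_subsingleton (hvanish : ∀ j ≤ l - 2, Subsingleton (A.X j))
    (j : ℤ) (hj : j ≤ l - 1) : Subsingleton (BX l A j) := by
  rcases eq_or_lt_of_le hj with h | h
  · rw [show j = l - 1 by omega, BX_low]
    infer_instance
  · rw [BX_gen l A j (by omega) (by omega)]
    exact hvanish j (by omega)

section Maps

variable (hvanish : ∀ j ≤ l - 2, Subsingleton (A.X j))
  (hs : s ≫ A.d l (l-1) = 𝟙 (A.X (l-1)))

/-- The chain map `f : A ⟶ B`. -/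
def f : A ⟶ B l A s where
  f j :=
    if h1 : j = l + 1 then
      eqToHom (show A.X j = A.X (l+1) from congrArg A.X h1) ≫ ι₁ l A ≫
        eqToHom (show P l A = BX l A j by rw [h1]; exact (BX_mid l A).symm)
    else if h2 : j = l - 1 then 0
    else eqToHom (BX_gen l A j h1 h2).symm
  comm' i j hij := by
    simp only [ComplexShape.down_Rel] at hij
    show _ ≫ Bd l A s i j = A.d i j ≫ _
    beta_reduce
    rcases lt_trichotomy i l with hi | hi | hi
    · -- i ≤ l - 1 : target BX j with j ≤ l - 2 subsingleton
      haveI := BX_subsingleton l A hvanish j (by omega)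
      apply ModuleCat.hom_ext; apply LinearMap.ext
      intro x
      exact Subsingleton.elim _ _
    · -- i = l
      rw [Bd_le l A s i j (le_of_eq hi), Limits.comp_zero,
        dif_neg (show ¬ (j = l + 1) by omega), dif_pos (show j = l - 1 by omega),
        Limits.comp_zero]
    · rcases lt_trichotomy i (l+2) with hi2 | hi2 | hi2
      · -- i = l + 1, j = l
        obtain rfl : i = l + 1 := by omega
        obtain rfl : l = j := by omega
        rw [Bd_lp1 l A s l rfl, dif_pos rfl, dif_neg (by omega), dif_neg (by omega)]
        simp only [Category.assoc, eqToHom_trans_assoc, eqToHom_refl, Category.id_comp]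
        have key : ι₁ l A ≫ φ₁ l A s = A.d (l+1) l := by
          apply ModuleCat.hom_ext; apply LinearMap.ext
          intro a
          show φ₁ l A s (ι₁ l A a) = A.d (l+1) l a
          have h3 : φ₁ l A s (ι₁ l A a) = A.d (l+1) l a + s 0 := rfl
          rw [h3, map_zero, add_zero]
        rw [reassoc_of% key]
      · -- i = l + 2, j = l + 1
        obtain rfl : j = l + 1 := by omega
        subst hi2
        rw [Bd_lp2 l A s (l+1) rfl, dif_neg (by omega), dif_neg (by omega), dif_pos rfl]
        simp only [Category.assoc, eqToHom_trans_assoc, eqToHom_refl, Category.id_comp]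
        have key : A.d (l+2) (l+1) ≫ ι₁ l A = φ₂ l A := by
          apply ModuleCat.hom_ext; apply LinearMap.ext
          intro a
          rfl
        rw [← reassoc_of% key]
      · -- i ≥ l + 3
        obtain rfl : j = i - 1 := by omega
        rw [Bd_ge l A s i (i-1) (by omega) (by omega), dif_neg (by omega), dif_neg (by omega),
          dif_neg (by omega), dif_neg (by omega)]
        simp

/-- The chain map `g : B ⟶ A`. -/
def g : B l A s ⟶ A where
  f j :=
    if h1 : j = l + 1 then
      eqToHom (show BX l A j = P l A by rw [h1]; exact BX_mid l A) ≫
        (ModuleCat.ofHom (LinearMap.fst R (A.X (l+1)) (A.X (l-1))) : P l A ⟶ A.X (l+1)) ≫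
        eqToHom (show A.X (l+1) = A.X j from congrArg A.X h1.symm)
    else if h2 : j = l then
      eqToHom (show BX l A j = A.X l by rw [h2]; exact BX_gen l A l (by omega) (by omega)) ≫
        ρ l A s ≫ eqToHom (show A.X l = A.X j from congrArg A.X h2.symm)
    else if _h3 : j = l - 1 then 0
    else eqToHom (BX_gen l A j h1 _h3)
  comm' i j hij := by
    simp only [ComplexShape.down_Rel] at hij
    show _ ≫ A.d i j = Bd l A s i j ≫ _
    beta_reduce
    rcases lt_trichotomy i l with hi | hi | hi
    · -- target A.X j with j ≤ l - 2 subsingleton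
      haveI := hvanish j (by omega)
      apply ModuleCat.hom_ext; apply LinearMap.ext
      intro x
      exact Subsingleton.elim _ _
    · -- i = l, j = l - 1
      obtain rfl : l = i := hi.symm
      obtain rfl : j = l - 1 := by omega
      rw [Bd_le l A s l (l-1) le_rfl, Limits.zero_comp,
        dif_neg (show ¬ (l = l + 1) by omega), dif_pos rfl]
      simp only [Category.assoc, eqToHom_refl, Category.comp_id]
      have h1 : ρ l A s ≫ A.d l (l-1) = 0 := by
        apply ModuleCat.hom_ext; apply LinearMap.ext
        intro a
        show A.d l (l-1) (ρ l A s a) = 0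
        have h2 : ρ l A s a = a - s (A.d l (l-1) a) := rfl
        rw [h2, map_sub, d_s_comm l A s hs, sub_self]
      rw [h1]
      simp
    · rcases lt_trichotomy i (l+2) with hi2 | hi2 | hi2
      · -- i = l + 1, j = l
        obtain rfl : i = l + 1 := by omega
        obtain rfl : l = j := by omega
        rw [Bd_lp1 l A s l rfl, dif_pos rfl, dif_neg (by omega), dif_pos rfl]
        simp only [Category.assoc, eqToHom_trans_assoc, eqToHom_refl, Category.id_comp,
          Category.comp_id]
        have key : (ModuleCat.ofHom (LinearMap.fst R (A.X (l+1)) (A.X (l-1))) : P l A ⟶ A.X (l+1)) ≫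
            A.d (l+1) l = φ₁ l A s ≫ ρ l A s := by
          apply ModuleCat.hom_ext; apply LinearMap.ext
          intro x
          show A.d (l+1) l x.1 = ρ l A s (φ₁ l A s x)
          have h1 : φ₁ l A s x = A.d (l+1) l x.1 + s x.2 := rfl
          have h2 : ∀ a, ρ l A s a = a - s (A.d l (l-1) a) := fun _ => rfl
          rw [h2, h1, map_add, map_add, d_d_apply A (l+1) l (l-1), d_s_comm l A s hs,
            map_zero, zero_add, add_sub_cancel_right]
        rw [key]
      · -- i = l + 2, j = l + 1
        obtain rfl : j = l + 1 := by omega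
        subst hi2
        rw [Bd_lp2 l A s (l+1) rfl, dif_neg (by omega), dif_neg (by omega), dif_neg (by omega),
          dif_pos rfl]
        simp only [Category.assoc, eqToHom_trans_assoc, eqToHom_refl, Category.id_comp,
          Category.comp_id]
        have key : φ₂ l A ≫ (ModuleCat.ofHom (LinearMap.fst R (A.X (l+1)) (A.X (l-1))) : P l A ⟶ A.X (l+1)) =
            A.d (l+2) (l+1) := by
          apply ModuleCat.hom_ext; apply LinearMap.ext
          intro a
          rfl
        rw [key]
      · -- i ≥ l + 3
        obtain rfl : j = i - 1 := by omega
        rw [Bd_ge l A s i (i-1) (by omega) (by omega), dif_neg (by omega), dif_neg (by omega),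
          dif_neg (by omega), dif_neg (by omega), dif_neg (by omega), dif_neg (by omega)]
        simp

lemma f_f (j : ℤ) : (f l A s hvanish).f j =
    if h1 : j = l + 1 then
      eqToHom (show A.X j = A.X (l+1) from congrArg A.X h1) ≫ ι₁ l A ≫
        eqToHom (show P l A = BX l A j by rw [h1]; exact (BX_mid l A).symm)
    else if h2 : j = l - 1 then 0
    else eqToHom (BX_gen l A j h1 h2).symm := rfl

lemma g_f (j : ℤ) : (g l A s hvanish hs).f j =
    if h1 : j = l + 1 then
      eqToHom (show BX l A j = P l A by rw [h1]; exact BX_mid l A) ≫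
        (ModuleCat.ofHom (LinearMap.fst R (A.X (l+1)) (A.X (l-1))) : P l A ⟶ A.X (l+1)) ≫
        eqToHom (show A.X (l+1) = A.X j from congrArg A.X h1.symm)
    else if h2 : j = l then
      eqToHom (show BX l A j = A.X l by rw [h2]; exact BX_gen l A l (by omega) (by omega)) ≫
        ρ l A s ≫ eqToHom (show A.X l = A.X j from congrArg A.X h2.symm)
    else if _h3 : j = l - 1 then 0
    else eqToHom (BX_gen l A j h1 _h3) := rfl

lemma B_d (i j : ℤ) : (B l A s).d i j = Bd l A s i j := rfl

lemma B_X (j : ℤ) : (B l A s).X j = BX l A j := rfl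

/-- homotopy data for `f ≫ g ≃ 𝟙 A` -/
def h1hom (i j : ℤ) : A.X i ⟶ A.X j :=
  if h : i = l - 1 ∧ j = l then
    eqToHom (congrArg A.X h.1) ≫ (-s) ≫ eqToHom (congrArg A.X h.2.symm)
  else 0

lemma h1hom_eq' (i j : ℤ) (hi : i = l - 1) (hj : j = l) :
    h1hom l A s i j =
      eqToHom (congrArg A.X hi) ≫ (-s) ≫ eqToHom (congrArg A.X hj.symm) := by
  rw [h1hom, dif_pos (⟨hi, hj⟩ : i = l - 1 ∧ j = l)]

lemma h1hom_ne (i j : ℤ) (h : ¬ (i = l - 1 ∧ j = l)) : h1hom l A s i j = 0 := dif_neg h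

/-- homotopy data for `g ≫ f ≃ 𝟙 B` -/
def h2hom (i j : ℤ) : BX l A i ⟶ BX l A j :=
  if h : i = l ∧ j = l + 1 then
    eqToHom (show BX l A i = A.X l by rw [h.1]; exact BX_gen l A l (by omega) (by omega)) ≫
      κ l A ≫ eqToHom (show P l A = BX l A j by rw [h.2]; exact (BX_mid l A).symm)
  else 0

lemma h2hom_eq' (i j : ℤ) (hi : i = l) (hj : j = l + 1) :
    h2hom l A i j =
      eqToHom (show BX l A i = A.X l by rw [hi]; exact BX_gen l A l (by omega) (by omega)) ≫
        κ l A ≫ eqToHom (show P l A = BX l A j by rw [hj]; exact (BX_mid l A).symm) := by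
  rw [h2hom, dif_pos (⟨hi, hj⟩ : i = l ∧ j = l + 1)]

lemma h2hom_ne (i j : ℤ) (h : ¬ (i = l ∧ j = l + 1)) : h2hom l A i j = 0 := dif_neg h

/-- The homotopy `f ≫ g ≃ 𝟙 A`. -/
def H1 : Homotopy ((f l A s hvanish) ≫ (g l A s hvanish hs)) (𝟙 A) where
  hom := h1hom l A s
  zero i j w := by
    refine h1hom_ne l A s i j (fun h => w ?_)
    rw [ComplexShape.down_Rel]
    omega
  comm i := by
    rw [HomologicalComplex.comp_f, HomologicalComplex.id_f]
    rcases lt_trichotomy i (l-1) with hi | hi | hi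
    · -- i ≤ l - 2 : target subsingleton
      haveI := hvanish i (by omega)
      apply ModuleCat.hom_ext; apply LinearMap.ext
      intro x
      exact Subsingleton.elim _ _
    · -- i = l - 1
      obtain rfl : i = l - 1 := hi
      rw [f_f l A s hvanish, dif_neg (show ¬((l-1 : ℤ) = l + 1) by omega), dif_pos rfl,
        Limits.zero_comp,
        dNext_eq _ (show (ComplexShape.down ℤ).Rel (l-1) (l-1-1) by
          rw [ComplexShape.down_Rel]; omega),
        prevD_eq _ (show (ComplexShape.down ℤ).Rel l (l-1) by
          rw [ComplexShape.down_Rel]; omega),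
        h1hom_ne l A s (l-1-1) (l-1) (by omega), Limits.comp_zero,
        h1hom_eq' l A s (l-1) l rfl rfl]
      simp only [eqToHom_refl, Category.id_comp, Category.comp_id, zero_add]
      rw [Preadditive.neg_comp, hs]
      simp
    · rcases lt_trichotomy i (l+1) with hi2 | hi2 | hi2
      · -- i = l
        obtain rfl : l = i := by omega
        rw [f_f l A s hvanish, dif_neg (show ¬(l = l + 1) by omega),
          dif_neg (show ¬(l = l - 1) by omega),
          g_f l A s hvanish hs, dif_neg (show ¬(l = l + 1) by omega), dif_pos rfl,
          dNext_eq _ (show (ComplexShape.down ℤ).Rel l (l-1) by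
            rw [ComplexShape.down_Rel]; omega),
          prevD_eq _ (show (ComplexShape.down ℤ).Rel (l+1) l by
            rw [ComplexShape.down_Rel]),
          h1hom_ne l A s l (l+1) (by omega), Limits.zero_comp,
          h1hom_eq' l A s (l-1) l rfl rfl]
        simp only [eqToHom_refl, Category.id_comp, Category.comp_id, eqToHom_trans_assoc,
          Category.assoc, add_zero]
        rw [ρ, Preadditive.comp_neg]
        abel
      · -- i = l + 1
        obtain rfl : i = l + 1 := hi2
        rw [f_f l A s hvanish, dif_pos rfl, g_f l A s hvanish hs, dif_pos rfl,
          dNext_eq _ (show (ComplexShape.down ℤ).Rel (l+1) l by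
            rw [ComplexShape.down_Rel]),
          prevD_eq _ (show (ComplexShape.down ℤ).Rel (l+2) (l+1) by
            rw [ComplexShape.down_Rel]; omega),
          h1hom_ne l A s l (l+1) (by omega), Limits.comp_zero,
          h1hom_ne l A s (l+1) (l+2) (by omega), Limits.zero_comp]
        simp only [eqToHom_refl, Category.id_comp, Category.comp_id, eqToHom_trans_assoc,
          Category.assoc, add_zero, zero_add]
        have key : ι₁ l A ≫ (ModuleCat.ofHom (LinearMap.fst R (A.X (l+1)) (A.X (l-1))) : P l A ⟶ A.X (l+1)) =
            𝟙 (A.X (l+1)) := by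
          apply ModuleCat.hom_ext; apply LinearMap.ext
          intro a
          rfl
        rw [key]
      · -- i ≥ l + 2
        rw [f_f l A s hvanish, dif_neg (show ¬(i = l + 1) by omega),
          dif_neg (show ¬(i = l - 1) by omega),
          g_f l A s hvanish hs, dif_neg (show ¬(i = l + 1) by omega),
          dif_neg (show ¬(i = l) by omega), dif_neg (show ¬(i = l - 1) by omega),
          dNext_eq _ (show (ComplexShape.down ℤ).Rel i (i-1) by
            rw [ComplexShape.down_Rel]; omega),
          prevD_eq _ (show (ComplexShape.down ℤ).Rel (i+1) i by
            rw [ComplexShape.down_Rel]),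
          h1hom_ne l A s (i-1) i (by omega), Limits.comp_zero,
          h1hom_ne l A s i (i+1) (by omega), Limits.zero_comp]
        simp

/-- The homotopy `g ≫ f ≃ 𝟙 B`. -/
def H2 : Homotopy ((g l A s hvanish hs) ≫ (f l A s hvanish)) (𝟙 (B l A s)) where
  hom := h2hom l A
  zero i j w := by
    refine h2hom_ne l A i j (fun h => w ?_)
    rw [ComplexShape.down_Rel]
    omega
  comm i := by
    rw [HomologicalComplex.comp_f, HomologicalComplex.id_f]
    rcases lt_trichotomy i l with hi | hi | hi
    · -- i ≤ l - 1 : target subsingleton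
      haveI : Subsingleton ((B l A s).X i) := BX_subsingleton l A hvanish i (by omega)
      apply ModuleCat.hom_ext; apply LinearMap.ext
      intro x
      exact Subsingleton.elim _ _
    · -- i = l
      obtain rfl : l = i := hi.symm
      rw [g_f l A s hvanish hs, dif_neg (show ¬(l = l + 1) by omega), dif_pos rfl,
        f_f l A s hvanish, dif_neg (show ¬(l = l + 1) by omega),
        dif_neg (show ¬(l = l - 1) by omega),
        dNext_eq _ (show (ComplexShape.down ℤ).Rel l (l-1) by
          rw [ComplexShape.down_Rel]; omega),
        prevD_eq _ (show (ComplexShape.down ℤ).Rel (l+1) l by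
          rw [ComplexShape.down_Rel]),
        B_d, Bd_le l A s l (l-1) le_rfl, Limits.zero_comp,
        h2hom_eq' l A l (l+1) rfl rfl, B_d, Bd_lp1 l A s l rfl]
      simp only [eqToHom_refl, Category.id_comp, Category.comp_id, eqToHom_trans_assoc,
        Category.assoc, zero_add]
      have core : ρ l A s = κ l A ≫ φ₁ l A s + 𝟙 (A.X l) := by
        apply ModuleCat.hom_ext; apply LinearMap.ext
        intro a
        show ρ l A s a = φ₁ l A s (κ l A a) + a
        have e1 : ρ l A s a = a - s (A.d l (l-1) a) := rfl
        have e2 : φ₁ l A s (κ l A a) = A.d (l+1) l 0 + s (-(A.d l (l-1) a)) := rfl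
        rw [e1, e2, map_zero, map_neg, zero_add, sub_eq_neg_add]
      rw [core,
        show (𝟙 ((B l A s).X l) : (B l A s).X l ⟶ (B l A s).X l) =
          eqToHom (BX_gen l A l (by omega) (by omega)) ≫ 𝟙 (A.X l) ≫
            eqToHom (BX_gen l A l (by omega) (by omega)).symm by simp]
      simp only [Preadditive.add_comp, Preadditive.comp_add, Category.assoc,
        Category.id_comp, Category.comp_id]
    · rcases lt_trichotomy i (l+1) with hi2 | hi2 | hi2
      · exact absurd hi2 (by omega)
      · -- i = l + 1
        obtain rfl : i = l + 1 := hi2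
        rw [g_f l A s hvanish hs, dif_pos rfl, f_f l A s hvanish, dif_pos rfl,
          dNext_eq _ (show (ComplexShape.down ℤ).Rel (l+1) l by
            rw [ComplexShape.down_Rel]),
          prevD_eq _ (show (ComplexShape.down ℤ).Rel (l+2) (l+1) by
            rw [ComplexShape.down_Rel]; omega),
          B_d, Bd_lp1 l A s l rfl, h2hom_eq' l A l (l+1) rfl rfl,
          h2hom_ne l A (l+1) (l+2) (by omega), Limits.zero_comp]
        simp only [eqToHom_refl, Category.id_comp, Category.comp_id, eqToHom_trans_assoc,
          Category.assoc, add_zero, zero_add]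
        have core : (ModuleCat.ofHom (LinearMap.fst R (A.X (l+1)) (A.X (l-1))) : P l A ⟶ A.X (l+1)) ≫ ι₁ l A =
            φ₁ l A s ≫ κ l A + 𝟙 (P l A) := by
          apply ModuleCat.hom_ext; apply LinearMap.ext
          intro x
          show ι₁ l A x.1 = κ l A (φ₁ l A s x) + x
          have e2 : κ l A (φ₁ l A s x) = (0, -(A.d l (l-1) (φ₁ l A s x))) := rfl
          have e3 : A.d l (l-1) (φ₁ l A s x)
              = A.d l (l-1) (A.d (l+1) l x.1) + A.d l (l-1) (s x.2) := by
            have e4 : φ₁ l A s x = A.d (l+1) l x.1 + s x.2 := rfl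
            rw [e4, map_add]
          rw [e2, e3, d_d_apply A (l+1) l (l-1), d_s_comm l A s hs, zero_add]
          have e5 : ι₁ l A x.1 = (x.1, 0) := rfl
          rw [e5]
          refine Prod.ext ?_ ?_
          · show x.1 = 0 + x.1
            rw [zero_add]
          · show (0 : ↥(A.X (l-1))) = -x.2 + x.2
            rw [neg_add_cancel]
        rw [reassoc_of% core,
          show (𝟙 ((B l A s).X (l+1)) : (B l A s).X (l+1) ⟶ (B l A s).X (l+1)) =
            eqToHom (BX_mid l A) ≫ 𝟙 (P l A) ≫ eqToHom (BX_mid l A).symm by simp]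
        simp only [Preadditive.add_comp, Preadditive.comp_add, Category.assoc,
          Category.id_comp, Category.comp_id]
      · -- i ≥ l + 2
        rw [g_f l A s hvanish hs, dif_neg (show ¬(i = l + 1) by omega),
          dif_neg (show ¬(i = l) by omega), dif_neg (show ¬(i = l - 1) by omega),
          f_f l A s hvanish, dif_neg (show ¬(i = l + 1) by omega),
          dif_neg (show ¬(i = l - 1) by omega),
          dNext_eq _ (show (ComplexShape.down ℤ).Rel i (i-1) by
            rw [ComplexShape.down_Rel]; omega),
          prevD_eq _ (show (ComplexShape.down ℤ).Rel (i+1) i by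
            rw [ComplexShape.down_Rel]),
          h2hom_ne l A (i-1) i (by omega), Limits.comp_zero,
          h2hom_ne l A i (i+1) (by omega), Limits.zero_comp]
        simp

/-- The homotopy equivalence between `A` and `B`. -/
def equiv : HomotopyEquiv A (B l A s) where
  hom := f l A s hvanish
  inv := g l A s hvanish hs
  homotopyHomInvId := H1 l A s hvanish hs
  homotopyInvHomId := H2 l A s hvanish hs

end Maps

end SplitOff

open SplitOff in
/-- Splitting-off lemma: if `A_*` is a finitely generated free (based) chain complex
over a ring `R` with `A_j = 0` for `j ≤ l - 2` and `H_{l-1}(A_*) = 0`, then there is a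
chain complex `B_*`, chain homotopy equivalent to `A_*`, with `B_j ≅ A_j` for
`j ≥ l + 2` and `j = l`, `B_{l+1} ≅ A_{l+1} ⊕ A_{l-1}`, and `B_j = 0` for `j ≤ l - 1`. -/
theorem splitting_off (R : Type) [Ring R] (l : ℤ)
    (A : ChainComplex (ModuleCat R) ℤ)
    (hfree : ∀ j, Module.Free R (A.X j)) (hfg : ∀ j, Module.Finite R (A.X j))
    (hvanish : ∀ j ≤ l - 2, Subsingleton (A.X j))
    (hH : Limits.IsZero (A.homology (l - 1))) :
    ∃ B : ChainComplex (ModuleCat R) ℤ,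
      (∀ j, Module.Free R (B.X j)) ∧ (∀ j, Module.Finite R (B.X j)) ∧
      Nonempty (HomotopyEquiv A B) ∧
      (∀ j, l + 2 ≤ j → Nonempty ((B.X j) ≃ₗ[R] (A.X j))) ∧
      Nonempty ((B.X l) ≃ₗ[R] (A.X l)) ∧
      Nonempty ((B.X (l + 1)) ≃ₗ[R] ((A.X (l + 1)) × (A.X (l - 1)))) ∧
      (∀ j ≤ l - 1, Subsingleton (B.X j)) := by
  haveI := hfree (l-1)
  have hp : (ComplexShape.down ℤ).prev (l-1) = l := by rw [ChainComplex.prev]; omega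
  have hn : (ComplexShape.down ℤ).next (l-1) = l-2 := by rw [ChainComplex.next]; omega
  have hEx : (A.sc' l (l-1) (l-2)).Exact := by
    have h1 : A.ExactAt (l-1) := (A.exactAt_iff_isZero_homology (l-1)).2 hH
    exact (A.exactAt_iff' l (l-1) (l-2) hp hn).1 h1
  rw [ShortComplex.moduleCat_exact_iff] at hEx
  have hsurj : Function.Surjective (A.d l (l-1)) := by
    intro x
    obtain ⟨y, hy⟩ := hEx x (@Subsingleton.elim _ (hvanish (l-2) (by omega)) _ _)
    exact ⟨y, hy⟩
  obtain ⟨s₀, hs0⟩ := Module.projective_lifting_property (A.d l (l-1)).hom LinearMap.id hsurj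
  obtain ⟨s, rfl⟩ : ∃ s : A.X (l-1) ⟶ A.X l, s.hom = s₀ := ⟨ModuleCat.ofHom s₀, rfl⟩
  have hs : (s : A.X (l-1) ⟶ A.X l) ≫ A.d l (l-1) = 𝟙 (A.X (l-1)) := ModuleCat.hom_ext hs0
  refine ⟨B l A s, ?_, ?_, ⟨equiv l A s hvanish hs⟩, ?_, ?_, ?_, ?_⟩
  · intro j
    by_cases h1 : j = l + 1
    · subst h1
      rw [B_X, BX_mid]
      show Module.Free R (↥(A.X (l+1)) × ↥(A.X (l-1)))
      haveI := hfree (l+1)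
      infer_instance
    · by_cases h2 : j = l - 1
      · subst h2
        rw [B_X, BX, if_neg (by omega), if_pos rfl]
        infer_instance
      · rw [B_X, BX_gen l A j h1 h2]
        exact hfree j
  · intro j
    by_cases h1 : j = l + 1
    · subst h1
      rw [B_X, BX_mid]
      show Module.Finite R (↥(A.X (l+1)) × ↥(A.X (l-1)))
      haveI := hfg (l+1)
      haveI := hfg (l-1)
      infer_instance
    · by_cases h2 : j = l - 1
      · subst h2
        rw [B_X, BX, if_neg (by omega), if_pos rfl]
        exact Module.Finite.of_surjective (0 : R →ₗ[R] _)
          (fun x => ⟨0, Subsingleton.elim _ _⟩)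
      · rw [B_X, BX_gen l A j h1 h2]
        exact hfg j
  · intro j hj
    exact ⟨(eqToIso (show (B l A s).X j = A.X j from BX_gen l A j (by omega) (by omega))).toLinearEquiv⟩
  · exact ⟨(eqToIso (show (B l A s).X l = A.X l from BX_gen l A l (by omega) (by omega))).toLinearEquiv⟩
  · exact ⟨(eqToIso (show (B l A s).X (l+1) = P l A from BX_mid l A)).toLinearEquiv⟩
  · intro j hj
    exact BX_subsingleton l A hvanish j hj
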